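/- Let W₁, …, W_m be random variables such that for each j in a ('null') set S₀ ⊆ {1,…,m}, the sign of W_j is an independent fair coin flip conditional on (|W₁|, …, |W_m|) and on (sign(W_j))_{j ∉ S₀}. Define, for threshold t > 0 and target level q ∈ [0,1], T = min{ t : (1 + #{j : W_j ≤ −t}) / max(#{j : W_j ≥ t}, 1) ≤ q } and Ŝ = {j : W_j ≥ T}. Then E[ #(Ŝ ∩ S₀) / max(#Ŝ, 1) ] ≤ q. -/

import Mathlib

open MeasureTheory
open scoped Classical

/-- Candidate thresholds: attained magnitudes `t = |W_j| > 0` at which the knockoff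
estimate of FDP, `(c + #{j : W_j ≤ −t}) / max(#{j : W_j ≥ t}, 1)`, is at most `q`
(`c = 1` for knockoff+, `c = 0` for knockoff). -/
noncomputable def knockoffCandidates (c q : ℝ) {m : ℕ} (w : Fin m → ℝ) : Finset ℝ :=
  (Finset.univ.image fun j => |w j|).filter fun t =>
    0 < t ∧ (c + ((Finset.univ.filter fun j => w j ≤ -t).card : ℝ)) /
        max ((Finset.univ.filter fun j => t ≤ w j).card : ℝ) 1 ≤ q

/-- The knockoff selected set `Ŝ = {j : W_j ≥ T}`, where `T` is the smallest candidate
threshold; if no threshold qualifies (`T = +∞`), the selected set is empty. -/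
noncomputable def knockoffSelect (c q : ℝ) {m : ℕ} (w : Fin m → ℝ) : Finset (Fin m) :=
  if h : (knockoffCandidates c q w).Nonempty then
    Finset.univ.filter fun j => (knockoffCandidates c q w).min' h ≤ w j
  else ∅

section KOproof


open Finset

namespace KOaux

def cnt {n : ℕ} (s : Fin n → Bool) : ℕ := (univ.filter fun i => s i = true).card

noncomputable def Mval {n : ℕ} (k : ℕ) (s : Fin n → Bool) : ℝ :=
  ((univ.filter fun i : Fin n => k ≤ (i : ℕ) ∧ s i = true).card : ℝ) /
  (1 + ((univ.filter fun i : Fin n => k ≤ (i : ℕ) ∧ s i = false).card : ℝ))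

lemma Mval_nonneg {n : ℕ} (k : ℕ) (s : Fin n → Bool) : 0 ≤ Mval k s := by
  apply div_nonneg (by positivity) (by positivity)

lemma cnt_le {n : ℕ} (s : Fin n → Bool) : cnt s ≤ n := by
  simpa [cnt] using card_filter_le (univ : Finset (Fin n)) fun i => s i = true

lemma sum_cube_succ {n : ℕ} (f : (Fin (n+1) → Bool) → ℝ) :
    ∑ s : Fin (n+1) → Bool, f s
      = (∑ u : Fin n → Bool, f (Fin.cons true u)) + ∑ u : Fin n → Bool, f (Fin.cons false u) := by
  rw [← Equiv.sum_comp (Fin.consEquiv fun _ => Bool) f, Fintype.sum_prod_type, Fintype.sum_bool]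
  rfl

lemma cnt_cons {n : ℕ} (b : Bool) (u : Fin n → Bool) :
    cnt (Fin.cons b u) = (if b = true then 1 else 0) + cnt u := by
  unfold cnt
  rw [card_filter, card_filter, Fin.sum_univ_succ]
  simp

lemma cnt_cons_true {n : ℕ} (u : Fin n → Bool) : cnt (Fin.cons true u) = cnt u + 1 := by
  rw [cnt_cons]; simp; omega

lemma cnt_cons_false {n : ℕ} (u : Fin n → Bool) : cnt (Fin.cons false u) = cnt u := by
  rw [cnt_cons]; simp

lemma count_cons_eq {n k : ℕ} (hk : 1 ≤ k) (b : Bool) (u : Fin n → Bool) (c : Bool) :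
    (univ.filter fun i : Fin (n+1) => k ≤ (i : ℕ) ∧ (Fin.cons b u : Fin (n+1) → Bool) i = c).card
      = (univ.filter fun i : Fin n => k - 1 ≤ (i : ℕ) ∧ u i = c).card := by
  rw [card_filter, card_filter, Fin.sum_univ_succ]
  simp only [Fin.cons_zero, Fin.cons_succ, Fin.val_zero, Fin.val_succ]
  rw [if_neg (by rintro ⟨h1, _⟩; omega), zero_add]
  apply Finset.sum_congr rfl
  intro i _
  have h : (k ≤ (i : ℕ) + 1 ∧ u i = c) ↔ (k - 1 ≤ (i : ℕ) ∧ u i = c) := by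
    constructor <;> (rintro ⟨h1, h2⟩; exact ⟨by omega, h2⟩)
  rw [if_congr h rfl rfl]

lemma Mval_cons {n : ℕ} (k : ℕ) (hk : 1 ≤ k) (b : Bool) (u : Fin n → Bool) :
    Mval k (Fin.cons b u) = Mval (k-1) u := by
  unfold Mval
  rw [count_cons_eq hk b u true, count_cons_eq hk b u false]

lemma cnt_false {n : ℕ} (s : Fin n → Bool) :
    (univ.filter fun i => s i = false).card = n - cnt s := by
  have h := card_filter_add_card_filter_not (s := (univ : Finset (Fin n)))
    (p := fun i => s i = true)
  simp only [card_univ, Fintype.card_fin] at h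
  have h2 : ((univ : Finset (Fin n)).filter fun i => ¬ s i = true)
      = (univ.filter fun i => s i = false) := by
    apply filter_congr; intro i _; simp
  rw [h2] at h
  unfold cnt
  omega

lemma Mval_zero {n : ℕ} (s : Fin n → Bool) :
    Mval 0 s = (cnt s : ℝ) / (1 + ((n - cnt s : ℕ) : ℝ)) := by
  have h1 : ((univ : Finset (Fin n)).filter fun i : Fin n => 0 ≤ (i : ℕ) ∧ s i = true)
      = (univ.filter fun i => s i = true) := by
    apply filter_congr; intro i _; simp
  have h2 : ((univ : Finset (Fin n)).filter fun i : Fin n => 0 ≤ (i : ℕ) ∧ s i = false)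
      = (univ.filter fun i => s i = false) := by
    apply filter_congr; intro i _; simp
  unfold Mval
  rw [h1, h2, cnt_false]
  rfl

lemma card_slice (n p : ℕ) :
    ((univ : Finset (Fin n → Bool)).filter fun s => cnt s = p).card = n.choose p := by
  induction n generalizing p with
  | zero =>
    rcases p with _ | p
    · rw [Nat.choose_zero_right, Finset.card_eq_one]
      refine ⟨fun _ => true, ?_⟩
      ext s
      simp only [mem_filter, mem_univ, true_and, mem_singleton]
      constructor
      · intro _; funext i; exact absurd i.2 (by omega)
      · intro h; rw [h]; simp [cnt]
    · rw [Nat.choose_eq_zero_of_lt (by omega), Finset.card_eq_zero,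
        Finset.filter_eq_empty_iff]
      intro s _
      have := cnt_le s; omega
  | succ n ih =>
    have key : (((univ : Finset (Fin (n+1) → Bool)).filter fun s => cnt s = p).card : ℝ)
        = ∑ s : Fin (n+1) → Bool, (if cnt s = p then (1:ℝ) else 0) := by
      rw [card_filter]; push_cast; rfl
    rw [sum_cube_succ (n := n) (fun s => if cnt s = p then (1:ℝ) else 0)] at key
    have ht : ∑ u : Fin n → Bool, (if cnt (Fin.cons true u) = p then (1:ℝ) else 0)
        = ((univ.filter fun u : Fin n → Bool => cnt u + 1 = p).card : ℝ) := by
      rw [card_filter]; push_cast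
      apply Finset.sum_congr rfl; intro u _
      have h : (cnt (Fin.cons true u) = p) ↔ (cnt u + 1 = p) := by
        rw [cnt_cons_true]
      rw [if_congr h rfl rfl]
    have hf : ∑ u : Fin n → Bool, (if cnt (Fin.cons false u) = p then (1:ℝ) else 0)
        = ((univ.filter fun u : Fin n → Bool => cnt u = p).card : ℝ) := by
      rw [card_filter]; push_cast
      apply Finset.sum_congr rfl; intro u _
      have h : (cnt (Fin.cons false u) = p) ↔ (cnt u = p) := by
        rw [cnt_cons_false]
      rw [if_congr h rfl rfl]
    rw [ht, hf] at key
    rcases p with _ | p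
    · have hempty : (univ.filter fun u : Fin n → Bool => cnt u + 1 = 0) = ∅ := by
        rw [Finset.filter_eq_empty_iff]; intro u _; omega
      rw [hempty] at key
      simp only [card_empty, Nat.cast_zero, zero_add] at key
      rw [Nat.choose_zero_right]
      have h0 := ih 0
      rw [Nat.choose_zero_right] at h0
      have : (((univ : Finset (Fin (n+1) → Bool)).filter fun s => cnt s = 0).card : ℝ) = 1 := by
        rw [key, h0]; norm_num
      exact_mod_cast this
    · have h1 : (univ.filter fun u : Fin n → Bool => cnt u + 1 = p + 1)
          = (univ.filter fun u : Fin n → Bool => cnt u = p) := by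
        apply filter_congr; intro u _; constructor <;> (intro h; omega)
      rw [h1] at key
      rw [Nat.choose_succ_succ]
      have : (((univ : Finset (Fin (n+1) → Bool)).filter fun s => cnt s = p + 1).card : ℝ)
          = (n.choose p : ℝ) + (n.choose (p+1) : ℝ) := by rw [key, ih p, ih (p+1)]
      exact_mod_cast this

end KOaux

namespace KOaux2
open KOaux

lemma ost_slice : ∀ (n : ℕ) (κ : (Fin n → Bool) → ℕ),
    (∀ s s', κ s < n → (∀ i : Fin n, (i : ℕ) < κ s → s' i = s i) → cnt s' = cnt s → κ s' = κ s) →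
    ∀ p : ℕ,
    ∑ s ∈ (univ : Finset (Fin n → Bool)).filter (fun s => cnt s = p), Mval (κ s) s
      ≤ (n.choose p : ℝ) * (p : ℝ) / (1 + (n : ℝ) - (p : ℝ)) := by
  intro n
  induction n with
  | zero =>
    intro κ _ p
    have hL : ∑ s ∈ (univ : Finset (Fin 0 → Bool)).filter (fun s => cnt s = p),
        Mval (κ s) s = 0 := by
      apply Finset.sum_eq_zero
      intro s _
      unfold Mval
      simp
    rw [hL]
    rcases p with _ | p
    · norm_num
    · rw [Nat.choose_eq_zero_of_lt (by omega)]
      norm_num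
  | succ n ih =>
    intro κ hstop p
    by_cases hp : n + 1 < p
    · have hempty : ((univ : Finset (Fin (n+1) → Bool)).filter (fun s => cnt s = p)) = ∅ := by
        rw [Finset.filter_eq_empty_iff]
        intro s _
        have := cnt_le s; omega
      rw [hempty, Finset.sum_empty, Nat.choose_eq_zero_of_lt hp]
      norm_num
    push_neg at hp
    by_cases hex : ∃ s₀ : Fin (n+1) → Bool, cnt s₀ = p ∧ κ s₀ = 0
    · obtain ⟨s₀, hc₀, hκ₀⟩ := hex
      have hall : ∀ s ∈ (univ : Finset (Fin (n+1) → Bool)).filter (fun s => cnt s = p),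
          κ s = 0 := by
        intro s hs
        rw [Finset.mem_filter] at hs
        have := hstop s₀ s (by omega) (fun i hi => by omega) (by rw [hs.2, hc₀])
        omega
      have hconst : ∀ s ∈ (univ : Finset (Fin (n+1) → Bool)).filter (fun s => cnt s = p),
          Mval (κ s) s = (p : ℝ) / (1 + ((n + 1 - p : ℕ) : ℝ)) := by
        intro s hs
        have hcs : cnt s = p := (Finset.mem_filter.mp hs).2
        rw [hall s hs, Mval_zero, hcs]
      rw [Finset.sum_congr rfl hconst, Finset.sum_const, card_slice, nsmul_eq_mul]
      rw [Nat.cast_sub hp]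
      push_cast
      rw [mul_div_assoc]
      exact le_of_eq (by ring)
    · push_neg at hex
      have hpos : ∀ s : Fin (n+1) → Bool, cnt s = p → 1 ≤ κ s := by
        intro s hs
        have := hex s hs; omega
      -- stopping property for the peeled rules
      have hstop' : ∀ b : Bool, ∀ u u' : Fin n → Bool, (κ (Fin.cons b u) - 1) < n →
          (∀ i : Fin n, (i : ℕ) < κ (Fin.cons b u) - 1 → u' i = u i) → cnt u' = cnt u →
          κ (Fin.cons b u') - 1 = κ (Fin.cons b u) - 1 := by
        intro b u u' hlt hpre hcnt
        have hc : cnt (Fin.cons b u') = cnt (Fin.cons b u) := by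
          rw [cnt_cons, cnt_cons, hcnt]
        have hpre' : ∀ i : Fin (n+1), (i : ℕ) < κ (Fin.cons b u) →
            (Fin.cons b u' : Fin (n+1) → Bool) i = (Fin.cons b u : Fin (n+1) → Bool) i := by
          intro i hi
          induction i using Fin.cases with
          | zero => rw [Fin.cons_zero, Fin.cons_zero]
          | succ i' =>
            rw [Fin.cons_succ, Fin.cons_succ]
            apply hpre
            have : ((i'.succ : Fin (n+1)) : ℕ) = (i' : ℕ) + 1 := by simp
            omega
        have := hstop (Fin.cons b u) (Fin.cons b u') (by omega) hpre' hc
        omega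
      -- rewrite the sum
      have hsum : ∑ s ∈ (univ : Finset (Fin (n+1) → Bool)).filter (fun s => cnt s = p),
            Mval (κ s) s
          = (∑ u ∈ (univ : Finset (Fin n → Bool)).filter (fun u => cnt u + 1 = p),
              Mval (κ (Fin.cons true u) - 1) u)
            + ∑ u ∈ (univ : Finset (Fin n → Bool)).filter (fun u => cnt u = p),
              Mval (κ (Fin.cons false u) - 1) u := by
        rw [Finset.sum_filter, Finset.sum_filter, Finset.sum_filter,
          sum_cube_succ (n := n) (fun s => if cnt s = p then Mval (κ s) s else 0)]
        congr 1
        · apply Finset.sum_congr rfl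
          intro u _
          by_cases hc : cnt u + 1 = p
          · have h1 : cnt (Fin.cons true u) = p := by rw [cnt_cons_true]; omega
            rw [if_pos hc, if_pos h1, Mval_cons _ (hpos _ h1)]
          · have h1 : ¬ cnt (Fin.cons true u) = p := by rw [cnt_cons_true]; omega
            rw [if_neg hc, if_neg h1]
        · apply Finset.sum_congr rfl
          intro u _
          by_cases hc : cnt u = p
          · have h1 : cnt (Fin.cons false u) = p := by rw [cnt_cons_false]; omega
            rw [if_pos hc, if_pos h1, Mval_cons _ (hpos _ h1)]
          · have h1 : ¬ cnt (Fin.cons false u) = p := by rw [cnt_cons_false]; omega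
            rw [if_neg hc, if_neg h1]
      rw [hsum]
      have ihT := ih (fun u => κ (Fin.cons true u) - 1) (hstop' true)
      have ihF := ih (fun u => κ (Fin.cons false u) - 1) (hstop' false)
      rcases p with _ | p'
      · have hempty : ((univ : Finset (Fin n → Bool)).filter (fun u => cnt u + 1 = 0)) = ∅ := by
          rw [Finset.filter_eq_empty_iff]; intro u _; omega
        rw [hempty, Finset.sum_empty, zero_add]
        have := ihF 0
        simp only [Nat.cast_zero, mul_zero, zero_div] at this ⊢
        exact this
      · -- p = p' + 1
        have hT := ihT p'
        have h1 : ((univ : Finset (Fin n → Bool)).filter (fun u => cnt u + 1 = p' + 1))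
            = ((univ : Finset (Fin n → Bool)).filter (fun u => cnt u = p')) := by
          apply filter_congr; intro u _; constructor <;> (intro h; omega)
        rw [h1]
        have hF := ihF (p' + 1)
        set A : ℝ := (n.choose p' : ℝ) with hA
        set B : ℝ := (n.choose (p'+1) : ℝ) with hB
        have hchoose : (((n+1).choose (p'+1) : ℕ) : ℝ) = A + B := by
          rw [Nat.choose_succ_succ]; push_cast; ring
        by_cases hpn : p' = n
        · subst hpn
          have hB0 : B = 0 := by
            rw [hB, Nat.choose_eq_zero_of_lt (by omega)]; norm_num
          have hA1 : A = 1 := by rw [hA, Nat.choose_self]; norm_num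
          have hF' : ∑ u ∈ (univ : Finset (Fin p' → Bool)).filter (fun u => cnt u = p' + 1),
              Mval (κ (Fin.cons false u) - 1) u = 0 := by
            apply Finset.sum_eq_zero
            intro u hu
            rw [Finset.mem_filter] at hu
            have := cnt_le u; omega
          have hTle : ∑ u ∈ (univ : Finset (Fin p' → Bool)).filter (fun u => cnt u = p'),
              Mval (κ (Fin.cons true u) - 1) u ≤ (p' : ℝ) := by
            calc _ ≤ A * (p' : ℝ) / (1 + (p' : ℝ) - (p' : ℝ)) := hT
            _ = (p' : ℝ) := by
              rw [hA1, one_mul, show (1 + (p' : ℝ) - (p' : ℝ)) = 1 by ring, div_one]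
          rw [hF', add_zero, Nat.choose_self]
          push_cast
          rw [show (1 + ((p' : ℝ) + 1) - ((p' : ℝ) + 1)) = 1 by ring, div_one, one_mul]
          calc _ ≤ (p' : ℝ) := hTle
          _ ≤ _ := by linarith
        · have hp'n : p' < n := by omega
          have hE : (0 : ℝ) < (n : ℝ) - (p' : ℝ) := by
            have : (p' : ℝ) < (n : ℝ) := by exact_mod_cast hp'n
            linarith
          have hD : (0 : ℝ) < 1 + (n : ℝ) - (p' : ℝ) := by linarith
          have hkey : B * ((p' : ℝ) + 1) = A * ((n : ℝ) - (p' : ℝ)) := by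
            have h := Nat.choose_succ_right_eq n p'
            have hcast : ((n - p' : ℕ) : ℝ) = (n : ℝ) - (p' : ℝ) :=
              Nat.cast_sub (by omega)
            rw [hA, hB, ← hcast]
            exact_mod_cast h
          have hFle : (B * ((p'+1 : ℕ) : ℝ) / (1 + (n : ℝ) - ((p'+1 : ℕ) : ℝ))) = A := by
            push_cast
            rw [show (1 + (n:ℝ) - ((p':ℝ)+1)) = (n:ℝ) - (p':ℝ) by ring]
            rw [hkey, mul_div_assoc, div_self hE.ne', mul_one]
          rw [hchoose]
          push_cast
          rw [show (1 + ((n:ℝ)+1) - ((p':ℝ)+1)) = 1 + (n:ℝ) - (p':ℝ) by ring]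
          have hgoal : A * (p' : ℝ) / (1 + (n:ℝ) - (p':ℝ)) + A
              ≤ (A + B) * ((p':ℝ) + 1) / (1 + (n:ℝ) - (p':ℝ)) := by
            rw [div_add' _ _ _ hD.ne', div_le_div_iff₀ hD hD]
            have hnum : A * (p' : ℝ) + A * (1 + (n:ℝ) - (p':ℝ))
                = (A + B) * ((p':ℝ) + 1) := by linear_combination -hkey
            rw [hnum]
          calc _ ≤ A * (p' : ℝ) / (1 + (n:ℝ) - (p':ℝ)) + A := by
                  apply add_le_add
                  · exact_mod_cast hT
                  · calc _ ≤ B * ((p'+1 : ℕ) : ℝ) / (1 + (n : ℝ) - ((p'+1 : ℕ) : ℝ)) := hF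
                    _ = A := hFle
          _ ≤ _ := by
                  calc _ ≤ (A + B) * ((p':ℝ) + 1) / (1 + (n:ℝ) - (p':ℝ)) := hgoal
                  _ = _ := by push_cast; ring_nf

lemma ost_total (n : ℕ) (κ : (Fin n → Bool) → ℕ)
    (hstop : ∀ s s', κ s < n → (∀ i : Fin n, (i : ℕ) < κ s → s' i = s i) →
      cnt s' = cnt s → κ s' = κ s) :
    ∑ s : Fin n → Bool, Mval (κ s) s ≤ 2 ^ n := by
  have hfib : ∑ s : Fin n → Bool, Mval (κ s) s
      = ∑ p ∈ Finset.range (n+1),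
          ∑ s ∈ (univ : Finset (Fin n → Bool)).filter (fun s => cnt s = p), Mval (κ s) s := by
    rw [Finset.sum_fiberwise_of_maps_to
      (fun s _ => Finset.mem_range.mpr (by have := cnt_le s; omega)) (fun s => Mval (κ s) s)]
  rw [hfib]
  calc _ ≤ ∑ p ∈ Finset.range (n+1), (n.choose p : ℝ) * (p : ℝ) / (1 + (n:ℝ) - (p:ℝ)) :=
        Finset.sum_le_sum (fun p _ => ost_slice n κ hstop p)
    _ ≤ ∑ p ∈ Finset.range (n+1), (if p = 0 then 0 else (n.choose (p-1) : ℝ)) := by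
        apply Finset.sum_le_sum
        intro p hp
        rcases p with _ | p'
        · norm_num
        · rw [if_neg (by omega)]
          have hp'n : p' < n := by
            have := Finset.mem_range.mp hp; omega
          have hE : (0 : ℝ) < (n : ℝ) - (p' : ℝ) := by
            have : (p' : ℝ) < (n : ℝ) := by exact_mod_cast hp'n
            linarith
          have hkey : (n.choose (p'+1) : ℝ) * ((p' : ℝ) + 1)
              = (n.choose p' : ℝ) * ((n : ℝ) - (p' : ℝ)) := by
            have h := Nat.choose_succ_right_eq n p'
            have hcast : ((n - p' : ℕ) : ℝ) = (n : ℝ) - (p' : ℝ) :=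
              Nat.cast_sub (by omega)
            rw [← hcast]
            exact_mod_cast h
          have : (p' + 1 - 1) = p' := by omega
          rw [this]
          push_cast
          rw [show (1 + (n:ℝ) - ((p':ℝ)+1)) = (n:ℝ) - (p':ℝ) by ring]
          rw [hkey, mul_div_assoc, div_self hE.ne', mul_one]
    _ = ∑ p' ∈ Finset.range n, (n.choose p' : ℝ) := by
        rw [Finset.sum_range_succ']
        simp
    _ ≤ ∑ p' ∈ Finset.range (n+1), (n.choose p' : ℝ) := by
        apply Finset.sum_le_sum_of_subset_of_nonneg
        · exact Finset.range_subset_range.mpr (by omega)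
        · intro p _ _; positivity
    _ ≤ 2 ^ n := by
        rw [← Nat.cast_sum]
        rw [Nat.sum_range_choose]
        push_cast
        norm_num

lemma init_seg {n : ℕ} {a : Fin n → ℝ} (ha : Monotone a) (t : ℝ) (i : Fin n) :
    a i < t ↔ (i : ℕ) < ((univ : Finset (Fin n)).filter fun i' => a i' < t).card := by
  constructor
  · intro hi
    have hsub : Finset.Iic i ⊆ (univ : Finset (Fin n)).filter fun i' => a i' < t := by
      intro i' hi'
      rw [Finset.mem_Iic] at hi'
      rw [Finset.mem_filter]
      exact ⟨Finset.mem_univ _, lt_of_le_of_lt (ha hi') hi⟩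
    have := Finset.card_le_card hsub
    rw [Fin.card_Iic] at this
    omega
  · intro hcard
    by_contra hni
    have hsub : ((univ : Finset (Fin n)).filter fun i' => a i' < t) ⊆ Finset.Iio i := by
      intro i' hi'
      rw [Finset.mem_filter] at hi'
      rw [Finset.mem_Iio]
      by_contra hge
      push_neg at hni hge
      exact absurd (lt_of_le_of_lt (ha hge) hi'.2) (not_lt.mpr hni)
    have := Finset.card_le_card hsub
    rw [Fin.card_Iio] at this
    omega

end KOaux2

namespace KOinst
open KOaux KOaux2

lemma exists_sorted_enum {m : ℕ} (S0 : Finset (Fin m)) (w : Fin m → ℝ) :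
    ∃ e : Fin S0.card → Fin m, Function.Injective e ∧ (∀ i, e i ∈ S0) ∧
      (∀ j ∈ S0, ∃ i, e i = j) ∧ Monotone fun i => |w (e i)| := by
  set e0 : Fin S0.card ≃o {x // x ∈ S0} := S0.orderIsoOfFin rfl with he0
  set f : Fin S0.card → ℝ := fun i => |w ((e0 i : Fin m))| with hf
  set σ := Tuple.sort f with hσ
  refine ⟨fun i => ((e0 (σ i)) : Fin m), ?_, ?_, ?_, ?_⟩
  · intro i1 i2 h
    have h1 : e0 (σ i1) = e0 (σ i2) := Subtype.ext h
    exact σ.injective (e0.injective h1)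
  · intro i; exact (e0 (σ i)).2
  · intro j hj
    obtain ⟨i0, hi0⟩ := e0.surjective ⟨j, hj⟩
    exact ⟨σ.symm i0, by simp [hi0]⟩
  · have := Tuple.monotone_sort f
    exact this

end KOinst

namespace KOmain
open KOaux KOaux2 KOinst

noncomputable def flipv {m : ℕ} (B : Finset (Fin m)) (v : Fin m → ℝ) : Fin m → ℝ :=
  fun j => (if j ∈ B then (-1 : ℝ) else 1) * v j

noncomputable def Gv (q : ℝ) {m : ℕ} (S0 : Finset (Fin m)) (v : Fin m → ℝ) : ℝ :=
  if h : (knockoffCandidates 1 q v).Nonempty then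
    ((S0.filter fun j => (knockoffCandidates 1 q v).min' h ≤ v j).card : ℝ) /
      (1 + ((S0.filter fun j => v j ≤ -((knockoffCandidates 1 q v).min' h)).card : ℝ))
  else 0

lemma card_split {m : ℕ} (S0 : Finset (Fin m)) (P : Fin m → Prop) :
    ((univ : Finset (Fin m)).filter P).card
      = (S0.filter P).card + ((univ : Finset (Fin m)).filter fun j => P j ∧ j ∉ S0).card := by
  have h := Finset.card_filter_add_card_filter_not
    (s := (univ : Finset (Fin m)).filter P) (p := fun j => j ∈ S0)
  rw [Finset.filter_filter, Finset.filter_filter] at h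
  have h1 : ((univ : Finset (Fin m)).filter fun j => P j ∧ j ∈ S0) = S0.filter P := by
    ext j; simp [Finset.mem_filter, and_comm]
  rw [h1] at h
  omega

lemma null_count_transfer {n : ℕ} (a : Fin n → ℝ) (s s' : Fin n → Bool) (t : ℝ) (c : Bool)
    (hpre : ∀ i, a i < t → s' i = s i) (hcnt : cnt s' = cnt s) :
    ((univ : Finset (Fin n)).filter fun i => t ≤ a i ∧ s' i = c).card
      = ((univ : Finset (Fin n)).filter fun i => t ≤ a i ∧ s i = c).card := by
  have htot : ∀ r : Fin n → Bool,
      ((univ : Finset (Fin n)).filter fun i => a i < t ∧ r i = c).card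
        + ((univ : Finset (Fin n)).filter fun i => t ≤ a i ∧ r i = c).card
      = ((univ : Finset (Fin n)).filter fun i => r i = c).card := by
    intro r
    have h := Finset.card_filter_add_card_filter_not
      (s := (univ : Finset (Fin n)).filter fun i => r i = c) (p := fun i => a i < t)
    rw [Finset.filter_filter, Finset.filter_filter] at h
    have h1 : ((univ : Finset (Fin n)).filter fun i => r i = c ∧ a i < t)
        = ((univ : Finset (Fin n)).filter fun i => a i < t ∧ r i = c) := by
      apply filter_congr; intro i _; exact and_comm
    have h2 : ((univ : Finset (Fin n)).filter fun i => r i = c ∧ ¬ a i < t)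
        = ((univ : Finset (Fin n)).filter fun i => t ≤ a i ∧ r i = c) := by
      apply filter_congr; intro i _; rw [not_lt]; exact and_comm
    rw [h1, h2] at h
    exact h
  have hlow : ((univ : Finset (Fin n)).filter fun i => a i < t ∧ s' i = c)
      = ((univ : Finset (Fin n)).filter fun i => a i < t ∧ s i = c) := by
    apply filter_congr; intro i _
    constructor
    · rintro ⟨h1, h2⟩; exact ⟨h1, by rw [← hpre i h1]; exact h2⟩
    · rintro ⟨h1, h2⟩; exact ⟨h1, by rw [hpre i h1]; exact h2⟩
  have hcol : ((univ : Finset (Fin n)).filter fun i => s' i = c).card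
      = ((univ : Finset (Fin n)).filter fun i => s i = c).card := by
    cases c
    · rw [cnt_false, cnt_false, hcnt]
    · simpa [cnt] using hcnt
  have e1 := htot s
  have e2 := htot s'
  rw [hlow] at e2
  omega

lemma card_S0_filter {m : ℕ} (S0 : Finset (Fin m)) (e : Fin S0.card → Fin m)
    (he_inj : Function.Injective e) (he_mem : ∀ i, e i ∈ S0)
    (he_surj : ∀ j ∈ S0, ∃ i, e i = j) (P : Fin m → Prop) :
    (S0.filter P).card = ((univ : Finset (Fin S0.card)).filter fun i => P (e i)).card := by
  symm
  apply Finset.card_nbij (i := e)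
  · intro i hi
    rw [Finset.mem_coe, Finset.mem_filter] at hi ⊢
    exact ⟨he_mem i, hi.2⟩
  · intro i1 _ i2 _ h
    exact he_inj h
  · intro j hj
    rw [Finset.mem_coe, Finset.mem_filter] at hj
    obtain ⟨i, hi⟩ := he_surj j hj.1
    refine ⟨i, ?_, hi⟩
    rw [Finset.mem_coe, Finset.mem_filter]
    exact ⟨Finset.mem_univ _, by rw [hi]; exact hj.2⟩

lemma count_pos_side {m : ℕ} (S0 : Finset (Fin m)) (w : Fin m → ℝ) (e : Fin S0.card → Fin m)
    (he_inj : Function.Injective e) (he_mem : ∀ i, e i ∈ S0)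
    (he_surj : ∀ j ∈ S0, ∃ i, e i = j) (v : Fin m → ℝ) (s : Fin S0.card → Bool)
    (hv_e : ∀ i, v (e i) = if s i = true then |w (e i)| else -|w (e i)|)
    (t : ℝ) (ht : 0 < t) :
    (S0.filter fun j => t ≤ v j).card
      = ((univ : Finset (Fin S0.card)).filter fun i => t ≤ |w (e i)| ∧ s i = true).card := by
  rw [card_S0_filter S0 e he_inj he_mem he_surj]
  congr 1
  apply filter_congr; intro i _
  rw [hv_e i]
  cases hsi : s i
  · simp only [hsi, Bool.false_eq_true, if_false, and_false, iff_false, not_le]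
    have := abs_nonneg (w (e i)); linarith
  · simp [hsi]

lemma count_neg_side {m : ℕ} (S0 : Finset (Fin m)) (w : Fin m → ℝ) (e : Fin S0.card → Fin m)
    (he_inj : Function.Injective e) (he_mem : ∀ i, e i ∈ S0)
    (he_surj : ∀ j ∈ S0, ∃ i, e i = j) (v : Fin m → ℝ) (s : Fin S0.card → Bool)
    (hv_e : ∀ i, v (e i) = if s i = true then |w (e i)| else -|w (e i)|)
    (t : ℝ) (ht : 0 < t) :
    (S0.filter fun j => v j ≤ -t).card
      = ((univ : Finset (Fin S0.card)).filter fun i => t ≤ |w (e i)| ∧ s i = false).card := by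
  rw [card_S0_filter S0 e he_inj he_mem he_surj]
  congr 1
  apply filter_congr; intro i _
  rw [hv_e i]
  cases hsi : s i
  · simp only [hsi, Bool.false_eq_true, if_false, and_true]
    constructor <;> (intro h; linarith)
  · simp only [hsi, if_true, Bool.true_eq_false, and_false, iff_false, not_le]
    have := abs_nonneg (w (e i)); linarith

lemma count_univ_pos {m : ℕ} (S0 : Finset (Fin m)) (w : Fin m → ℝ) (e : Fin S0.card → Fin m)
    (he_inj : Function.Injective e) (he_mem : ∀ i, e i ∈ S0)
    (he_surj : ∀ j ∈ S0, ∃ i, e i = j) (v : Fin m → ℝ) (s : Fin S0.card → Bool)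
    (hv_e : ∀ i, v (e i) = if s i = true then |w (e i)| else -|w (e i)|)
    (hv_off : ∀ j ∉ S0, v j = w j)
    (t : ℝ) (ht : 0 < t) :
    ((univ : Finset (Fin m)).filter fun j => t ≤ v j).card
      = ((univ : Finset (Fin S0.card)).filter fun i => t ≤ |w (e i)| ∧ s i = true).card
        + ((univ : Finset (Fin m)).filter fun j => t ≤ w j ∧ j ∉ S0).card := by
  rw [card_split S0 (fun j => t ≤ v j),
    count_pos_side S0 w e he_inj he_mem he_surj v s hv_e t ht]
  have hbg : ((univ : Finset (Fin m)).filter fun j => t ≤ v j ∧ j ∉ S0)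
      = ((univ : Finset (Fin m)).filter fun j => t ≤ w j ∧ j ∉ S0) := by
    apply filter_congr; intro j _
    by_cases hj : j ∈ S0
    · constructor
      · rintro ⟨_, h⟩; exact absurd hj h
      · rintro ⟨_, h⟩; exact absurd hj h
    · rw [hv_off j hj]
  rw [hbg]

lemma count_univ_neg {m : ℕ} (S0 : Finset (Fin m)) (w : Fin m → ℝ) (e : Fin S0.card → Fin m)
    (he_inj : Function.Injective e) (he_mem : ∀ i, e i ∈ S0)
    (he_surj : ∀ j ∈ S0, ∃ i, e i = j) (v : Fin m → ℝ) (s : Fin S0.card → Bool)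
    (hv_e : ∀ i, v (e i) = if s i = true then |w (e i)| else -|w (e i)|)
    (hv_off : ∀ j ∉ S0, v j = w j)
    (t : ℝ) (ht : 0 < t) :
    ((univ : Finset (Fin m)).filter fun j => v j ≤ -t).card
      = ((univ : Finset (Fin S0.card)).filter fun i => t ≤ |w (e i)| ∧ s i = false).card
        + ((univ : Finset (Fin m)).filter fun j => w j ≤ -t ∧ j ∉ S0).card := by
  rw [card_split S0 (fun j => v j ≤ -t),
    count_neg_side S0 w e he_inj he_mem he_surj v s hv_e t ht]
  have hbg : ((univ : Finset (Fin m)).filter fun j => v j ≤ -t ∧ j ∉ S0)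
      = ((univ : Finset (Fin m)).filter fun j => w j ≤ -t ∧ j ∉ S0) := by
    apply filter_congr; intro j _
    by_cases hj : j ∈ S0
    · constructor
      · rintro ⟨_, h⟩; exact absurd hj h
      · rintro ⟨_, h⟩; exact absurd hj h
    · rw [hv_off j hj]
  rw [hbg]

lemma mem_cand_iff {m : ℕ} (q t : ℝ) (v : Fin m → ℝ) :
    t ∈ knockoffCandidates 1 q v ↔
      (t ∈ (univ : Finset (Fin m)).image fun j => |v j|) ∧ 0 < t ∧
        (1 + (((univ : Finset (Fin m)).filter fun j => v j ≤ -t).card : ℝ)) /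
          max (((univ : Finset (Fin m)).filter fun j => t ≤ v j).card : ℝ) 1 ≤ q := by
  unfold knockoffCandidates
  rw [Finset.mem_filter]

lemma cand_transfer {m : ℕ} (q : ℝ) (S0 : Finset (Fin m)) (w : Fin m → ℝ)
    (e : Fin S0.card → Fin m)
    (he_inj : Function.Injective e) (he_mem : ∀ i, e i ∈ S0)
    (he_surj : ∀ j ∈ S0, ∃ i, e i = j) (v v' : Fin m → ℝ) (s s' : Fin S0.card → Bool)
    (hv_e : ∀ i, v (e i) = if s i = true then |w (e i)| else -|w (e i)|)
    (hv_off : ∀ j ∉ S0, v j = w j)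
    (hv'_e : ∀ i, v' (e i) = if s' i = true then |w (e i)| else -|w (e i)|)
    (hv'_off : ∀ j ∉ S0, v' j = w j)
    (habs : ∀ j, |v j| = |w j|) (habs' : ∀ j, |v' j| = |w j|)
    (t : ℝ) (hpre : ∀ i, |w (e i)| < t → s' i = s i) (hcnt : cnt s' = cnt s) :
    t ∈ knockoffCandidates 1 q v' ↔ t ∈ knockoffCandidates 1 q v := by
  rw [mem_cand_iff, mem_cand_iff]
  have himg : ((univ : Finset (Fin m)).image fun j => |v' j|)
      = ((univ : Finset (Fin m)).image fun j => |v j|) := by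
    apply Finset.image_congr
    intro j _
    show |v' j| = |v j|
    rw [habs', habs]
  rw [himg]
  refine and_congr Iff.rfl (and_congr_right fun ht => ?_)
  rw [count_univ_pos S0 w e he_inj he_mem he_surj v s hv_e hv_off t ht,
    count_univ_pos S0 w e he_inj he_mem he_surj v' s' hv'_e hv'_off t ht,
    count_univ_neg S0 w e he_inj he_mem he_surj v s hv_e hv_off t ht,
    count_univ_neg S0 w e he_inj he_mem he_surj v' s' hv'_e hv'_off t ht,
    null_count_transfer (fun i => |w (e i)|) s s' t true hpre hcnt,
    null_count_transfer (fun i => |w (e i)|) s s' t false hpre hcnt]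

lemma sum_G_le {m : ℕ} (q : ℝ) (S0 : Finset (Fin m)) (w : Fin m → ℝ) :
    ∑ B ∈ S0.powerset, Gv q S0 (flipv B w) ≤ 2 ^ S0.card := by
  classical
  obtain ⟨e, he_inj, he_mem, he_surj, hmono⟩ := exists_sorted_enum S0 w
  set d : Fin S0.card → Bool := fun i => decide (w (e i) < 0) with hd
  set φ : (Fin S0.card → Bool) → Finset (Fin m) :=
    fun s => ((univ : Finset (Fin S0.card)).filter fun i => s i = d i).image e with hφ
  have hφ_sub : ∀ s, φ s ⊆ S0 := by
    intro s j hj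
    simp only [hφ, Finset.mem_image] at hj
    obtain ⟨i, _, rfl⟩ := hj
    exact he_mem i
  have hmem_φ : ∀ s i, e i ∈ φ s ↔ s i = d i := by
    intro s i
    simp only [hφ, Finset.mem_image]
    constructor
    · rintro ⟨i', hi', he'⟩
      rw [Finset.mem_filter] at hi'
      rw [← he_inj he']
      exact hi'.2
    · intro h
      exact ⟨i, Finset.mem_filter.mpr ⟨Finset.mem_univ _, h⟩, rfl⟩
  have hv_off : ∀ s, ∀ j ∉ S0, flipv (φ s) w j = w j := by
    intro s j hj
    have hns : j ∉ φ s := fun h => hj (hφ_sub s h)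
    unfold flipv
    rw [if_neg hns, one_mul]
  have hv_e : ∀ s i, flipv (φ s) w (e i)
      = if s i = true then |w (e i)| else -|w (e i)| := by
    intro s i
    unfold flipv
    by_cases hw : w (e i) < 0
    · have hdi : d i = true := by simp [hd, hw]
      cases hsi : s i
      · have hns : ¬ (e i ∈ φ s) := by rw [hmem_φ, hsi, hdi]; simp
        rw [if_neg hns, one_mul, if_neg (by simp), abs_of_neg hw, neg_neg]
      · have hin : e i ∈ φ s := by rw [hmem_φ, hsi, hdi]
        rw [if_pos hin, if_pos rfl, abs_of_neg hw, neg_one_mul]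
    · push_neg at hw
      have hdi : d i = false := by simp [hd, not_lt.mpr hw]
      cases hsi : s i
      · have hin : e i ∈ φ s := by rw [hmem_φ, hsi, hdi]
        rw [if_pos hin, if_neg (by simp), abs_of_nonneg hw, neg_one_mul]
      · have hns : ¬ (e i ∈ φ s) := by rw [hmem_φ, hsi, hdi]; simp
        rw [if_neg hns, if_pos rfl, one_mul, abs_of_nonneg hw]
  have habs : ∀ (B : Finset (Fin m)) (j : Fin m), |flipv B w j| = |w j| := by
    intro B j
    unfold flipv
    by_cases hB : j ∈ B
    · rw [if_pos hB, neg_one_mul, abs_neg]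
    · rw [if_neg hB, one_mul]
  -- the stopping-time index
  set κfun : (Fin S0.card → Bool) → ℕ := fun s =>
    if h : (knockoffCandidates 1 q (flipv (φ s) w)).Nonempty then
      ((univ : Finset (Fin S0.card)).filter fun i =>
        |w (e i)| < (knockoffCandidates 1 q (flipv (φ s) w)).min' h).card
    else S0.card with hκ
  -- G = M
  have hGM : ∀ s, Gv q S0 (flipv (φ s) w) = Mval (κfun s) s := by
    intro s
    unfold Gv
    by_cases h : (knockoffCandidates 1 q (flipv (φ s) w)).Nonempty
    · rw [dif_pos h]
      have hκs : κfun s = ((univ : Finset (Fin S0.card)).filter fun i =>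
          |w (e i)| < (knockoffCandidates 1 q (flipv (φ s) w)).min' h).card := by
        simp only [hκ]; rw [dif_pos h]
      have hTmem := Finset.min'_mem _ h
      have hT0 : 0 < (knockoffCandidates 1 q (flipv (φ s) w)).min' h :=
        ((mem_cand_iff q _ _).mp hTmem).2.1
      rw [count_pos_side S0 w e he_inj he_mem he_surj _ s (hv_e s) _ hT0,
        count_neg_side S0 w e he_inj he_mem he_surj _ s (hv_e s) _ hT0]
      have hiff : ∀ i : Fin S0.card,
          ((knockoffCandidates 1 q (flipv (φ s) w)).min' h ≤ |w (e i)|)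
            ↔ (κfun s ≤ (i : ℕ)) := by
        intro i
        rw [hκs]
        constructor
        · intro hTa
          by_contra hlt
          push_neg at hlt
          have := (init_seg hmono _ i).mpr hlt
          linarith
        · intro hκi
          by_contra hlt
          push_neg at hlt
          have := (init_seg hmono _ i).mp hlt
          omega
      unfold Mval
      have h1 : ((univ : Finset (Fin S0.card)).filter fun i =>
            (knockoffCandidates 1 q (flipv (φ s) w)).min' h ≤ |w (e i)| ∧ s i = true)
          = ((univ : Finset (Fin S0.card)).filter fun i : Fin S0.card => κfun s ≤ (i : ℕ) ∧ s i = true) := by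
        apply filter_congr; intro i _
        exact and_congr_left' (hiff i)
      have h2 : ((univ : Finset (Fin S0.card)).filter fun i =>
            (knockoffCandidates 1 q (flipv (φ s) w)).min' h ≤ |w (e i)| ∧ s i = false)
          = ((univ : Finset (Fin S0.card)).filter fun i : Fin S0.card => κfun s ≤ (i : ℕ) ∧ s i = false) := by
        apply filter_congr; intro i _
        exact and_congr_left' (hiff i)
      rw [h1, h2]
    · rw [dif_neg h]
      have hκs : κfun s = S0.card := by simp only [hκ]; rw [dif_neg h]
      unfold Mval
      rw [hκs]
      have hempty : ((univ : Finset (Fin S0.card)).filter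
          fun i : Fin S0.card => S0.card ≤ (i : ℕ) ∧ s i = true) = ∅ := by
        rw [Finset.filter_eq_empty_iff]
        rintro i _ ⟨h1, _⟩
        exact absurd i.isLt (not_lt.mpr h1)
      rw [hempty]
      simp
  -- stopping property
  have hstop : ∀ s s', κfun s < S0.card →
      (∀ i : Fin S0.card, (i : ℕ) < κfun s → s' i = s i) → cnt s' = cnt s →
      κfun s' = κfun s := by
    intro s s' hlt hpre hcnt
    have h : (knockoffCandidates 1 q (flipv (φ s) w)).Nonempty := by
      by_contra hne
      have : κfun s = S0.card := by simp only [hκ]; rw [dif_neg hne]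
      omega
    have hκs : κfun s = ((univ : Finset (Fin S0.card)).filter fun i =>
        |w (e i)| < (knockoffCandidates 1 q (flipv (φ s) w)).min' h).card := by
      simp only [hκ]; rw [dif_pos h]
    have hpre_a : ∀ i, |w (e i)| < (knockoffCandidates 1 q (flipv (φ s) w)).min' h →
        s' i = s i := by
      intro i hi
      apply hpre
      rw [hκs]
      exact (init_seg hmono _ i).mp hi
    have htr : ∀ t, t ≤ (knockoffCandidates 1 q (flipv (φ s) w)).min' h →
        (t ∈ knockoffCandidates 1 q (flipv (φ s') w)
          ↔ t ∈ knockoffCandidates 1 q (flipv (φ s) w)) := by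
      intro t hle
      exact cand_transfer q S0 w e he_inj he_mem he_surj _ _ s s'
        (hv_e s) (hv_off s) (hv_e s') (hv_off s') (habs _) (habs _) t
        (fun i hi => hpre_a i (lt_of_lt_of_le hi hle)) hcnt
    have hT' : (knockoffCandidates 1 q (flipv (φ s) w)).min' h
        ∈ knockoffCandidates 1 q (flipv (φ s') w) :=
      (htr _ le_rfl).mpr (Finset.min'_mem _ h)
    have h' : (knockoffCandidates 1 q (flipv (φ s') w)).Nonempty := ⟨_, hT'⟩
    have hle : (knockoffCandidates 1 q (flipv (φ s') w)).min' h'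
        ≤ (knockoffCandidates 1 q (flipv (φ s) w)).min' h := Finset.min'_le _ _ hT'
    have hback : (knockoffCandidates 1 q (flipv (φ s') w)).min' h'
        ∈ knockoffCandidates 1 q (flipv (φ s) w) :=
      (htr _ hle).mp (Finset.min'_mem _ h')
    have hge : (knockoffCandidates 1 q (flipv (φ s) w)).min' h
        ≤ (knockoffCandidates 1 q (flipv (φ s') w)).min' h' := Finset.min'_le _ _ hback
    have heq : (knockoffCandidates 1 q (flipv (φ s') w)).min' h'
        = (knockoffCandidates 1 q (flipv (φ s) w)).min' h := le_antisymm hle hge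
    simp only [hκ]
    rw [dif_pos h', dif_pos h, heq]
  -- reindex the powerset sum
  have hsum_eq : ∑ B ∈ S0.powerset, Gv q S0 (flipv B w)
      = ∑ s : Fin S0.card → Bool, Mval (κfun s) s := by
    have hMG : ∑ s : Fin S0.card → Bool, Mval (κfun s) s
        = ∑ s : Fin S0.card → Bool, Gv q S0 (flipv (φ s) w) :=
      Finset.sum_congr rfl (fun s _ => (hGM s).symm)
    rw [hMG]
    have hinv : ∀ B ∈ S0.powerset, φ (fun i => decide (e i ∈ B) == d i) = B := by
      intro B hB
      rw [Finset.mem_powerset] at hB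
      ext j
      by_cases hjS : j ∈ S0
      · obtain ⟨i, rfl⟩ := he_surj j hjS
        rw [hmem_φ]
        by_cases hmB : e i ∈ B <;> cases hdi : d i <;> simp [hmB, hdi]
      · constructor
        · intro hj; exact absurd (hφ_sub _ hj) hjS
        · intro hj; exact absurd (hB hj) hjS
    apply Finset.sum_nbij'
      (i := fun B => (fun i => decide (e i ∈ B) == d i))
      (j := φ)
    · intro B _; exact Finset.mem_univ _
    · intro s _; exact Finset.mem_powerset.mpr (hφ_sub s)
    · -- left inverse : φ (ψ B) = B
      exact hinv
    · -- right inverse : ψ (φ s) = s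
      intro s _
      funext i
      have hdd : decide (e i ∈ φ s) = decide (s i = d i) :=
        decide_eq_decide.mpr (hmem_φ s i)
      rw [hdd]
      cases hsi : s i <;> cases hdi : d i <;> simp
    · intro B hB
      rw [hinv B hB]
  rw [hsum_eq]
  exact ost_total _ κfun hstop

noncomputable def FDPfun (q : ℝ) {m : ℕ} (S0 : Finset (Fin m)) (v : Fin m → ℝ) : ℝ :=
  (((knockoffSelect 1 q v) ∩ S0).card : ℝ) / max ((knockoffSelect 1 q v).card : ℝ) 1

lemma FDP_le_qG {m : ℕ} (q : ℝ) (S0 : Finset (Fin m)) (v : Fin m → ℝ) :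
    FDPfun q S0 v ≤ q * Gv q S0 v := by
  unfold FDPfun knockoffSelect Gv
  by_cases h : (knockoffCandidates 1 q v).Nonempty
  · rw [dif_pos h, dif_pos h]
    have hTmem := Finset.min'_mem _ h
    rw [mem_cand_iff] at hTmem
    obtain ⟨-, hT0, hratio⟩ := hTmem
    have hinter : ((univ : Finset (Fin m)).filter
          fun j => (knockoffCandidates 1 q v).min' h ≤ v j) ∩ S0
        = S0.filter fun j => (knockoffCandidates 1 q v).min' h ≤ v j := by
      ext j
      simp only [Finset.mem_inter, Finset.mem_filter, Finset.mem_univ, true_and]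
      exact and_comm
    rw [hinter]
    set T := (knockoffCandidates 1 q v).min' h with hT
    set Vp : ℝ := ((S0.filter fun j => T ≤ v j).card : ℝ) with hVp
    set R : ℝ := (((univ : Finset (Fin m)).filter fun j => T ≤ v j).card : ℝ) with hR
    set Bc : ℝ := (((univ : Finset (Fin m)).filter fun j => v j ≤ -T).card : ℝ) with hBc
    set Vm : ℝ := ((S0.filter fun j => v j ≤ -T).card : ℝ) with hVm
    have hVmBc : Vm ≤ Bc := by
      rw [hVm, hBc]
      exact_mod_cast Finset.card_le_card
        (Finset.filter_subset_filter _ (Finset.subset_univ S0))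
    have hVp0 : 0 ≤ Vp := by rw [hVp]; positivity
    have hVm0 : 0 ≤ Vm := by rw [hVm]; positivity
    have hBc1 : (0:ℝ) < 1 + Bc := by rw [hBc]; positivity
    have hVm1 : (0:ℝ) < 1 + Vm := by linarith
    have hmax : (0:ℝ) < max R 1 := lt_of_lt_of_le one_pos (le_max_right _ _)
    have key : Vp / max R 1 = (Vp / (1 + Bc)) * ((1 + Bc) / max R 1) := by
      field_simp
    rw [key]
    have hfac : Vp / (1 + Bc) ≤ Vp / (1 + Vm) :=
      div_le_div_of_nonneg_left hVp0 hVm1 (by linarith)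
    have hp1 : 0 ≤ (1 + Bc) / max R 1 := div_nonneg (le_of_lt hBc1) (le_of_lt hmax)
    have hp2 : 0 ≤ Vp / (1 + Vm) := div_nonneg hVp0 (le_of_lt hVm1)
    calc (Vp / (1 + Bc)) * ((1 + Bc) / max R 1) ≤ (Vp / (1 + Vm)) * q :=
          mul_le_mul hfac hratio hp1 hp2
    _ = q * (Vp / (1 + Vm)) := mul_comm _ _
  · rw [dif_neg h, dif_neg h]
    simp

lemma mem_select_iff {m : ℕ} (q : ℝ) (v : Fin m → ℝ) (j : Fin m) :
    j ∈ knockoffSelect 1 q v ↔ ∃ i : Fin m,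
      (|v i| ∈ knockoffCandidates 1 q v) ∧ |v i| ≤ v j ∧
        ∀ i' : Fin m, |v i'| ∈ knockoffCandidates 1 q v → |v i| ≤ |v i'| := by
  unfold knockoffSelect
  constructor
  · intro hj
    by_cases h : (knockoffCandidates 1 q v).Nonempty
    · rw [dif_pos h, Finset.mem_filter] at hj
      have hmem := Finset.min'_mem _ h
      have himg := ((mem_cand_iff q _ v).mp hmem).1
      rw [Finset.mem_image] at himg
      obtain ⟨i, -, hi⟩ := himg
      refine ⟨i, by rw [hi]; exact hmem, by rw [hi]; exact hj.2, ?_⟩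
      intro i' hi'
      rw [hi]
      exact Finset.min'_le _ _ hi'
    · rw [dif_neg h] at hj
      exact absurd hj (Finset.notMem_empty j)
  · rintro ⟨i, hcand, hle, hmin⟩
    have h : (knockoffCandidates 1 q v).Nonempty := ⟨_, hcand⟩
    rw [dif_pos h, Finset.mem_filter]
    refine ⟨Finset.mem_univ _, ?_⟩
    have hmem := Finset.min'_mem _ h
    have himg := ((mem_cand_iff q _ v).mp hmem).1
    rw [Finset.mem_image] at himg
    obtain ⟨i'', -, hi''⟩ := himg
    have h1 : (knockoffCandidates 1 q v).min' h ≤ |v i| := Finset.min'_le _ _ hcand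
    have h2 : |v i| ≤ (knockoffCandidates 1 q v).min' h := by
      rw [← hi'']
      exact hmin i'' (by rw [hi'']; exact hmem)
    linarith

lemma measurable_FDP (q : ℝ) {m : ℕ} (S0 : Finset (Fin m)) :
    Measurable (fun v : Fin m → ℝ => FDPfun q S0 v) := by
  classical
  -- measurability of the count functions
  have hcount_ge : ∀ i : Fin m, Measurable fun v : Fin m → ℝ =>
      (((univ : Finset (Fin m)).filter fun k => |v i| ≤ v k).card : ℝ) := by
    intro i
    have hrw : (fun v : Fin m → ℝ =>
        (((univ : Finset (Fin m)).filter fun k => |v i| ≤ v k).card : ℝ))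
        = fun v => ∑ k : Fin m, if |v i| ≤ v k then (1:ℝ) else 0 := by
      funext v
      rw [Finset.card_filter]
      push_cast
      rfl
    rw [hrw]
    apply Finset.measurable_sum
    intro k _
    exact Measurable.ite
      (measurableSet_le ((measurable_pi_apply i).abs) (measurable_pi_apply k))
      measurable_const measurable_const
  have hcount_le : ∀ i : Fin m, Measurable fun v : Fin m → ℝ =>
      (((univ : Finset (Fin m)).filter fun k => v k ≤ -|v i|).card : ℝ) := by
    intro i
    have hrw : (fun v : Fin m → ℝ =>
        (((univ : Finset (Fin m)).filter fun k => v k ≤ -|v i|).card : ℝ))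
        = fun v => ∑ k : Fin m, if v k ≤ -|v i| then (1:ℝ) else 0 := by
      funext v
      rw [Finset.card_filter]
      push_cast
      rfl
    rw [hrw]
    apply Finset.measurable_sum
    intro k _
    exact Measurable.ite
      (measurableSet_le (measurable_pi_apply k) ((measurable_pi_apply i).abs.neg))
      measurable_const measurable_const
  -- measurability of candidacy of |v i|
  have hC : ∀ i : Fin m, MeasurableSet {v : Fin m → ℝ | |v i| ∈ knockoffCandidates 1 q v} := by
    intro i
    have hset : {v : Fin m → ℝ | |v i| ∈ knockoffCandidates 1 q v}
        = {v : Fin m → ℝ | 0 < |v i|} ∩ {v : Fin m → ℝ |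
            (1 + (((univ : Finset (Fin m)).filter fun k => v k ≤ -|v i|).card : ℝ)) /
              max (((univ : Finset (Fin m)).filter fun k => |v i| ≤ v k).card : ℝ) 1 ≤ q} := by
      ext v
      rw [Set.mem_setOf_eq, mem_cand_iff]
      simp only [Set.mem_inter_iff, Set.mem_setOf_eq]
      constructor
      · rintro ⟨-, h1, h2⟩; exact ⟨h1, h2⟩
      · rintro ⟨h1, h2⟩
        exact ⟨Finset.mem_image_of_mem _ (Finset.mem_univ i), h1, h2⟩
    rw [hset]
    apply MeasurableSet.inter
    · exact measurableSet_lt measurable_const (measurable_pi_apply i).abs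
    · exact measurableSet_le
        ((measurable_const.add (hcount_le i)).div ((hcount_ge i).max measurable_const))
        measurable_const
  -- measurability of selection membership
  have hSel : ∀ j : Fin m, MeasurableSet {v : Fin m → ℝ | j ∈ knockoffSelect 1 q v} := by
    intro j
    have hset : {v : Fin m → ℝ | j ∈ knockoffSelect 1 q v}
        = ⋃ i : Fin m, ({v : Fin m → ℝ | |v i| ∈ knockoffCandidates 1 q v}
            ∩ {v : Fin m → ℝ | |v i| ≤ v j}
            ∩ ⋂ i' : Fin m, ({v : Fin m → ℝ | |v i'| ∈ knockoffCandidates 1 q v}ᶜ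
                ∪ {v : Fin m → ℝ | |v i| ≤ |v i'|})) := by
      ext v
      rw [Set.mem_setOf_eq, mem_select_iff]
      simp only [Set.mem_iUnion, Set.mem_inter_iff, Set.mem_iInter, Set.mem_union,
        Set.mem_compl_iff, Set.mem_setOf_eq]
      constructor
      · rintro ⟨i, h1, h2, h3⟩
        exact ⟨i, ⟨h1, h2⟩, fun i' => by
          by_cases hc : |v i'| ∈ knockoffCandidates 1 q v
          · exact Or.inr (h3 i' hc)
          · exact Or.inl hc⟩
      · rintro ⟨i, ⟨h1, h2⟩, h3⟩
        refine ⟨i, h1, h2, fun i' hc => ?_⟩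
        rcases h3 i' with hn | hle
        · exact absurd hc hn
        · exact hle
    rw [hset]
    apply MeasurableSet.iUnion
    intro i
    apply MeasurableSet.inter
    · exact (hC i).inter
        (measurableSet_le (measurable_pi_apply i).abs (measurable_pi_apply j))
    · apply MeasurableSet.iInter
      intro i'
      exact ((hC i').compl).union
        (measurableSet_le (measurable_pi_apply i).abs (measurable_pi_apply i').abs)
  -- measurability of the selection set being a given finset
  have hSelEq : ∀ A : Finset (Fin m), MeasurableSet {v : Fin m → ℝ | knockoffSelect 1 q v = A} := by
    intro A
    have hset : {v : Fin m → ℝ | knockoffSelect 1 q v = A}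
        = ⋂ j : Fin m, (if j ∈ A then {v : Fin m → ℝ | j ∈ knockoffSelect 1 q v}
            else {v : Fin m → ℝ | j ∈ knockoffSelect 1 q v}ᶜ) := by
      ext v
      rw [Set.mem_setOf_eq, Set.mem_iInter]
      constructor
      · intro hEq j
        by_cases hj : j ∈ A
        · rw [if_pos hj]; rw [Set.mem_setOf_eq, hEq]; exact hj
        · rw [if_neg hj]; rw [Set.mem_compl_iff, Set.mem_setOf_eq, hEq]; exact hj
      · intro hAll
        ext j
        have := hAll j
        by_cases hj : j ∈ A
        · rw [if_pos hj] at this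
          exact ⟨fun _ => hj, fun _ => this⟩
        · rw [if_neg hj] at this
          rw [Set.mem_compl_iff, Set.mem_setOf_eq] at this
          exact ⟨fun hsel => absurd hsel this, fun hA => absurd hA hj⟩
    rw [hset]
    apply MeasurableSet.iInter
    intro j
    by_cases hj : j ∈ A
    · rw [if_pos hj]; exact hSel j
    · rw [if_neg hj]; exact (hSel j).compl
  -- express FDPfun as a finite sum of indicators
  have hrw : (fun v : Fin m → ℝ => FDPfun q S0 v)
      = fun v => ∑ A : Finset (Fin m),
          if knockoffSelect 1 q v = A then
            (((A ∩ S0).card : ℝ) / max ((A.card : ℝ)) 1) else 0 := by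
    funext v
    rw [Finset.sum_ite_eq (univ : Finset (Finset (Fin m))) (knockoffSelect 1 q v)
      (fun A => ((A ∩ S0).card : ℝ) / max ((A.card : ℝ)) 1), if_pos (Finset.mem_univ _)]
    rfl
  rw [hrw]
  apply Finset.measurable_sum
  intro A _
  exact Measurable.ite (hSelEq A) measurable_const measurable_const

end KOmain

open KOmain

/-- Knockoff+ FDR control: if the signs of the null statistics are i.i.d. fair coin
flips conditional on the magnitudes and the non-null signs (expressed as invariance
of the joint law under arbitrary sign flips of null coordinates), then the expected
false discovery proportion of the knockoff+ selection is at most `q`. -/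
theorem knockoff_plus_FDR_control
    {Ω : Type*} [MeasurableSpace Ω] (μ : Measure Ω) [IsProbabilityMeasure μ]
    {m : ℕ} (W : Fin m → Ω → ℝ) (hmeas : ∀ j, Measurable (W j))
    (S0 : Finset (Fin m))
    (hsign : ∀ ε : Fin m → ℝ, (∀ j, ε j = 1 ∨ ε j = -1) → (∀ j ∉ S0, ε j = 1) →
      Measure.map (fun ω j => ε j * W j ω) μ = Measure.map (fun ω j => W j ω) μ)
    (q : ℝ) (hq0 : 0 ≤ q) (hq1 : q ≤ 1) :
    ∫ ω, (((knockoffSelect 1 q fun j => W j ω) ∩ S0).card : ℝ) /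
        max ((knockoffSelect 1 q fun j => W j ω).card : ℝ) 1 ∂μ ≤ q := by
  classical
  show (∫ ω, FDPfun q S0 (fun j => W j ω) ∂μ) ≤ q
  have hWmeas : Measurable (fun ω => (fun j => W j ω)) := measurable_pi_lambda _ hmeas
  have hFmeas := measurable_FDP q S0
  have hF0 : ∀ v : Fin m → ℝ, 0 ≤ FDPfun q S0 v := by
    intro v; unfold FDPfun
    exact div_nonneg (by positivity) (le_trans zero_le_one (le_max_right _ _))
  have hF1 : ∀ v : Fin m → ℝ, FDPfun q S0 v ≤ 1 := by
    intro v; unfold FDPfun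
    rw [div_le_one (lt_of_lt_of_le one_pos (le_max_right _ _))]
    calc ((knockoffSelect 1 q v ∩ S0).card : ℝ) ≤ ((knockoffSelect 1 q v).card : ℝ) := by
          exact_mod_cast Finset.card_le_card Finset.inter_subset_left
    _ ≤ max ((knockoffSelect 1 q v).card : ℝ) 1 := le_max_left _ _
  have hInt : ∀ g : Ω → (Fin m → ℝ), Measurable g →
      Integrable (fun ω => FDPfun q S0 (g ω)) μ := by
    intro g hg
    apply (integrable_const (1:ℝ)).mono' ((hFmeas.comp hg).aestronglyMeasurable)
    apply Filter.Eventually.of_forall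
    intro ω
    show |FDPfun q S0 (g ω)| ≤ 1
    rw [abs_of_nonneg (hF0 _)]
    exact hF1 _
  have hkey : ∀ B ∈ S0.powerset, (∫ ω, FDPfun q S0 (fun j => W j ω) ∂μ)
      = ∫ ω, FDPfun q S0 (flipv B (fun j => W j ω)) ∂μ := by
    intro B hBp
    have hB := Finset.mem_powerset.mp hBp
    have hflipmeas : Measurable (fun ω => (fun j => (if j ∈ B then (-1:ℝ) else 1) * W j ω)) :=
      measurable_pi_lambda _ (fun j => measurable_const.mul (hmeas j))
    have hmap := hsign (fun j => if j ∈ B then (-1:ℝ) else 1)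
      (fun j => by by_cases h : j ∈ B <;> simp [h])
      (fun j hj => if_neg (fun hjB => hj (hB hjB)))
    have h1 : (∫ ω, FDPfun q S0 (fun j => W j ω) ∂μ)
        = ∫ v, FDPfun q S0 v ∂(Measure.map (fun ω (j : Fin m) => W j ω) μ) :=
      (MeasureTheory.integral_map hWmeas.aemeasurable hFmeas.aestronglyMeasurable).symm
    have h2 : (∫ v, FDPfun q S0 v
          ∂(Measure.map (fun ω (j : Fin m) => (if j ∈ B then (-1:ℝ) else 1) * W j ω) μ))
        = ∫ ω, FDPfun q S0 (fun j => (if j ∈ B then (-1:ℝ) else 1) * W j ω) ∂μ :=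
      MeasureTheory.integral_map hflipmeas.aemeasurable hFmeas.aestronglyMeasurable
    rw [h1, ← hmap, h2]
    rfl
  have hint2 : ∀ B : Finset (Fin m),
      Integrable (fun ω => FDPfun q S0 (flipv B (fun j => W j ω))) μ := by
    intro B
    apply hInt (fun ω => flipv B (fun j => W j ω))
    show Measurable (fun ω => (fun j => (if j ∈ B then (-1:ℝ) else 1) * W j ω))
    exact measurable_pi_lambda _ (fun j => measurable_const.mul (hmeas j))
  have hsum1 : ∑ B ∈ S0.powerset, (∫ ω, FDPfun q S0 (fun j => W j ω) ∂μ)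
      = ∫ ω, ∑ B ∈ S0.powerset, FDPfun q S0 (flipv B (fun j => W j ω)) ∂μ := by
    rw [Finset.sum_congr rfl hkey]
    exact (integral_finset_sum _ (fun B _ => hint2 B)).symm
  have hptw : ∀ ω, ∑ B ∈ S0.powerset, FDPfun q S0 (flipv B (fun j => W j ω))
      ≤ q * 2 ^ S0.card := by
    intro ω
    calc ∑ B ∈ S0.powerset, FDPfun q S0 (flipv B (fun j => W j ω))
        ≤ ∑ B ∈ S0.powerset, q * Gv q S0 (flipv B (fun j => W j ω)) :=
          Finset.sum_le_sum (fun B _ => FDP_le_qG q S0 _)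
    _ = q * ∑ B ∈ S0.powerset, Gv q S0 (flipv B (fun j => W j ω)) :=
          (Finset.mul_sum _ _ _).symm
    _ ≤ q * 2 ^ S0.card := mul_le_mul_of_nonneg_left (sum_G_le q S0 _) hq0
  have hconst : ∫ ω, ∑ B ∈ S0.powerset, FDPfun q S0 (flipv B (fun j => W j ω)) ∂μ
      ≤ q * 2 ^ S0.card := by
    calc _ ≤ ∫ _ω, q * 2 ^ S0.card ∂μ := by
          apply integral_mono (integrable_finset_sum _ (fun B _ => hint2 B))
            (integrable_const _)
          intro ω; exact hptw ω
    _ = q * 2 ^ S0.card := by rw [integral_const]; simp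
  have hfin : (2 ^ S0.card : ℝ) * (∫ ω, FDPfun q S0 (fun j => W j ω) ∂μ)
      ≤ q * 2 ^ S0.card := by
    have hc : ∑ _B ∈ S0.powerset, (∫ ω, FDPfun q S0 (fun j => W j ω) ∂μ)
        = (2 ^ S0.card : ℝ) * (∫ ω, FDPfun q S0 (fun j => W j ω) ∂μ) := by
      rw [Finset.sum_const, Finset.card_powerset, nsmul_eq_mul]
      push_cast
      ring
    rw [← hc, hsum1]
    exact hconst
  have h2n : (0:ℝ) < 2 ^ S0.card := by positivity
  nlinarith [hfin, h2n]

end KOproof
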